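/- There exists a constant C > 0 such that for all x' ∈ ℝ², all τ' ∈ ℝ² ∖ {0}, and all y, p ∈ ℝ²: √(|y|² + |p|²) ≤ C · (1 + |τ'|^{−1}) · max_{k ∈ ℤ²∖{(0,0)}, |k| ≤ 2} | u_k(x')·y + ((τ'·∇)u_k(x'))·p |, where (τ'·∇)u_k(x') ∈ ℝ² denotes the directional derivative of the vector field u_k at x' in the direction τ'. -/

import Mathlib

open Real

/-- The real Fourier basis function `e_k` on `ℝ²`. -/
noncomputable def eFun (k : ℤ × ℤ) (x : ℝ × ℝ) : ℝ :=
  if 0 < k.1 ∨ (k.1 = 0 ∧ 0 < k.2) then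
    Real.sin ((k.1 : ℝ) * x.1 + (k.2 : ℝ) * x.2)
  else
    Real.cos ((k.1 : ℝ) * x.1 + (k.2 : ℝ) * x.2)

/-- The divergence-free velocity field `u_k := ∇^⊥ Δ^{-1} e_k = -|k|^{-2} ∇^⊥ e_k`,
where `∇^⊥ f = (-∂₂ f, ∂₁ f)`. -/
noncomputable def uFun (k : ℤ × ℤ) (x : ℝ × ℝ) : ℝ × ℝ :=
  (-(((k.1 : ℝ) ^ 2 + (k.2 : ℝ) ^ 2)⁻¹)) •
    (-(fderiv ℝ (eFun k) x (0, 1)), fderiv ℝ (eFun k) x (1, 0))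

/-- The Euclidean norm on `ℝ²`. -/
noncomputable def enorm2 (a : ℝ × ℝ) : ℝ := Real.sqrt (a.1 ^ 2 + a.2 ^ 2)

/-- The Euclidean dot product on `ℝ²`. -/
def dotR (a b : ℝ × ℝ) : ℝ := a.1 * b.1 + a.2 * b.2

noncomputable def Lk (a b : ℝ) : (ℝ × ℝ) →L[ℝ] ℝ :=
  a • (ContinuousLinearMap.fst ℝ ℝ ℝ) + b • (ContinuousLinearMap.snd ℝ ℝ ℝ)

lemma Lk_apply (a b : ℝ) (v : ℝ × ℝ) : Lk a b v = a * v.1 + b * v.2 := by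
  simp [Lk, smul_eq_mul]

lemma hasFDerivAt_lin (a b : ℝ) (x : ℝ × ℝ) :
    HasFDerivAt (fun x : ℝ × ℝ => a * x.1 + b * x.2) (Lk a b) x := by
  exact (hasFDerivAt_fst.const_mul a).add (hasFDerivAt_snd.const_mul b)

lemma hasFDerivAt_sinL (a b : ℝ) (x : ℝ × ℝ) :
    HasFDerivAt (fun x : ℝ × ℝ => Real.sin (a * x.1 + b * x.2))
      (Real.cos (a * x.1 + b * x.2) • Lk a b) x :=
  (Real.hasDerivAt_sin _).comp_hasFDerivAt x (hasFDerivAt_lin a b x)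

lemma hasFDerivAt_cosL (a b : ℝ) (x : ℝ × ℝ) :
    HasFDerivAt (fun x : ℝ × ℝ => Real.cos (a * x.1 + b * x.2))
      ((-Real.sin (a * x.1 + b * x.2)) • Lk a b) x :=
  (Real.hasDerivAt_cos _).comp_hasFDerivAt x (hasFDerivAt_lin a b x)

noncomputable def cK (k : ℤ × ℤ) : ℝ := (((k.1 : ℝ)) ^ 2 + ((k.2 : ℝ)) ^ 2)⁻¹

lemma eFun_sin (k : ℤ × ℤ) (hs : 0 < k.1 ∨ (k.1 = 0 ∧ 0 < k.2)) :
    eFun k = fun x : ℝ × ℝ => Real.sin ((k.1 : ℝ) * x.1 + (k.2 : ℝ) * x.2) :=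
  funext fun _ => if_pos hs

lemma eFun_cos (k : ℤ × ℤ) (hs : ¬ (0 < k.1 ∨ (k.1 = 0 ∧ 0 < k.2))) :
    eFun k = fun x : ℝ × ℝ => Real.cos ((k.1 : ℝ) * x.1 + (k.2 : ℝ) * x.2) :=
  funext fun _ => if_neg hs

lemma uFun_sin (k : ℤ × ℤ) (hs : 0 < k.1 ∨ (k.1 = 0 ∧ 0 < k.2)) :
    uFun k = fun x : ℝ × ℝ =>
      (cK k * (k.2 : ℝ) * Real.cos ((k.1 : ℝ) * x.1 + (k.2 : ℝ) * x.2),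
       -(cK k * (k.1 : ℝ) * Real.cos ((k.1 : ℝ) * x.1 + (k.2 : ℝ) * x.2))) := by
  funext x
  unfold uFun
  rw [eFun_sin k hs, (hasFDerivAt_sinL (k.1 : ℝ) (k.2 : ℝ) x).fderiv]
  simp [Lk_apply, cK, Prod.smul_def]
  constructor <;> ring

lemma uFun_cos (k : ℤ × ℤ) (hs : ¬ (0 < k.1 ∨ (k.1 = 0 ∧ 0 < k.2))) :
    uFun k = fun x : ℝ × ℝ =>
      (-(cK k * (k.2 : ℝ) * Real.sin ((k.1 : ℝ) * x.1 + (k.2 : ℝ) * x.2)),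
       cK k * (k.1 : ℝ) * Real.sin ((k.1 : ℝ) * x.1 + (k.2 : ℝ) * x.2)) := by
  funext x
  unfold uFun
  rw [eFun_cos k hs, (hasFDerivAt_cosL (k.1 : ℝ) (k.2 : ℝ) x).fderiv]
  simp [Lk_apply, cK, Prod.smul_def]
  constructor <;> ring

lemma fderiv_uFun_sin (k : ℤ × ℤ) (hs : 0 < k.1 ∨ (k.1 = 0 ∧ 0 < k.2)) (x τ : ℝ × ℝ) :
    fderiv ℝ (uFun k) x τ =
      (-(cK k * (k.2 : ℝ) * Real.sin ((k.1 : ℝ) * x.1 + (k.2 : ℝ) * x.2) *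
          ((k.1 : ℝ) * τ.1 + (k.2 : ℝ) * τ.2)),
        cK k * (k.1 : ℝ) * Real.sin ((k.1 : ℝ) * x.1 + (k.2 : ℝ) * x.2) *
          ((k.1 : ℝ) * τ.1 + (k.2 : ℝ) * τ.2)) := by
  have h1 := (hasFDerivAt_cosL (k.1 : ℝ) (k.2 : ℝ) x).const_mul (cK k * (k.2 : ℝ))
  have h2 := ((hasFDerivAt_cosL (k.1 : ℝ) (k.2 : ℝ) x).const_mul (cK k * (k.1 : ℝ))).neg
  have h := HasFDerivAt.prodMk (f₂ := fun y : ℝ × ℝ => -(cK k * (k.1 : ℝ) * Real.cos ((k.1 : ℝ) * y.1 + (k.2 : ℝ) * y.2))) h1 h2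
  rw [uFun_sin k hs, h.fderiv]
  simp [Lk_apply, Prod.smul_def]
  constructor <;> ring

lemma fderiv_uFun_cos (k : ℤ × ℤ) (hs : ¬ (0 < k.1 ∨ (k.1 = 0 ∧ 0 < k.2))) (x τ : ℝ × ℝ) :
    fderiv ℝ (uFun k) x τ =
      (-(cK k * (k.2 : ℝ) * Real.cos ((k.1 : ℝ) * x.1 + (k.2 : ℝ) * x.2) *
          ((k.1 : ℝ) * τ.1 + (k.2 : ℝ) * τ.2)),
        cK k * (k.1 : ℝ) * Real.cos ((k.1 : ℝ) * x.1 + (k.2 : ℝ) * x.2) *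
          ((k.1 : ℝ) * τ.1 + (k.2 : ℝ) * τ.2)) := by
  have h1 := ((hasFDerivAt_sinL (k.1 : ℝ) (k.2 : ℝ) x).const_mul (cK k * (k.2 : ℝ))).neg
  have h2 := (hasFDerivAt_sinL (k.1 : ℝ) (k.2 : ℝ) x).const_mul (cK k * (k.1 : ℝ))
  have h := HasFDerivAt.prodMk (f₁ := fun y : ℝ × ℝ => -(cK k * (k.2 : ℝ) * Real.sin ((k.1 : ℝ) * y.1 + (k.2 : ℝ) * y.2))) h1 h2
  rw [uFun_cos k hs, h.fderiv]
  simp [Lk_apply, Prod.smul_def]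
  constructor <;> ring

lemma F_sin (k : ℤ × ℤ) (hs : 0 < k.1 ∨ (k.1 = 0 ∧ 0 < k.2)) (x τ y p : ℝ × ℝ) :
    dotR (uFun k x) y + dotR (fderiv ℝ (uFun k) x τ) p =
      cK k * (Real.cos ((k.1 : ℝ) * x.1 + (k.2 : ℝ) * x.2) *
          ((k.2 : ℝ) * y.1 - (k.1 : ℝ) * y.2)
        + Real.sin ((k.1 : ℝ) * x.1 + (k.2 : ℝ) * x.2) *
          ((k.1 : ℝ) * τ.1 + (k.2 : ℝ) * τ.2) * ((k.1 : ℝ) * p.2 - (k.2 : ℝ) * p.1)) := by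
  rw [fderiv_uFun_sin k hs, congrFun (uFun_sin k hs) x]
  simp only [dotR]
  ring

lemma F_cos (k : ℤ × ℤ) (hs : ¬ (0 < k.1 ∨ (k.1 = 0 ∧ 0 < k.2))) (x τ y p : ℝ × ℝ) :
    dotR (uFun k x) y + dotR (fderiv ℝ (uFun k) x τ) p =
      cK k * (Real.sin ((k.1 : ℝ) * x.1 + (k.2 : ℝ) * x.2) *
          ((k.1 : ℝ) * y.2 - (k.2 : ℝ) * y.1)
        + Real.cos ((k.1 : ℝ) * x.1 + (k.2 : ℝ) * x.2) *
          ((k.1 : ℝ) * τ.1 + (k.2 : ℝ) * τ.2) * ((k.1 : ℝ) * p.2 - (k.2 : ℝ) * p.1)) := by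
  rw [fderiv_uFun_cos k hs, congrFun (uFun_cos k hs) x]
  simp only [dotR]
  ring

lemma rot_bound (c K s co a b M : ℝ) (pyth : s ^ 2 + co ^ 2 = 1) (hc : c * K = 1)
    (e1 : (c * (-(co * a) + s * b)) ^ 2 ≤ M ^ 2)
    (e2 : (c * (s * a + co * b)) ^ 2 ≤ M ^ 2) :
    a ^ 2 + b ^ 2 ≤ 2 * K ^ 2 * M ^ 2 := by
  have hid : (c * (-(co * a) + s * b)) ^ 2 + (c * (s * a + co * b)) ^ 2
      = c ^ 2 * (a ^ 2 + b ^ 2) := by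
    linear_combination (c ^ 2 * (a ^ 2 + b ^ 2)) * pyth
  calc a ^ 2 + b ^ 2 = (c * K) ^ 2 * (a ^ 2 + b ^ 2) := by rw [hc]; ring
    _ = K ^ 2 * ((c * (-(co * a) + s * b)) ^ 2 + (c * (s * a + co * b)) ^ 2) := by
        rw [hid]; ring
    _ ≤ K ^ 2 * (M ^ 2 + M ^ 2) := mul_le_mul_of_nonneg_left (add_le_add e1 e2) (sq_nonneg K)
    _ = 2 * K ^ 2 * M ^ 2 := by ring

lemma pair_bound (k : ℤ × ℤ) (hs : 0 < k.1 ∨ (k.1 = 0 ∧ 0 < k.2)) (x τ y p : ℝ × ℝ) (M : ℝ)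
    (h1 : |dotR (uFun k x) y + dotR (fderiv ℝ (uFun k) x τ) p| ≤ M)
    (h2 : |dotR (uFun (-k) x) y + dotR (fderiv ℝ (uFun (-k)) x τ) p| ≤ M) :
    ((k.1 : ℝ) * y.2 - (k.2 : ℝ) * y.1) ^ 2 +
      (((k.1 : ℝ) * τ.1 + (k.2 : ℝ) * τ.2) * ((k.1 : ℝ) * p.2 - (k.2 : ℝ) * p.1)) ^ 2
      ≤ 2 * ((k.1 : ℝ) ^ 2 + (k.2 : ℝ) ^ 2) ^ 2 * M ^ 2 := by
  have hs' : ¬ (0 < (-k).1 ∨ ((-k).1 = 0 ∧ 0 < (-k).2)) := by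
    simp only [Prod.fst_neg, Prod.snd_neg]; omega
  rw [F_sin k hs] at h1
  rw [F_cos (-k) hs'] at h2
  simp only [Prod.fst_neg, Prod.snd_neg, Int.cast_neg] at h2
  have hcK : cK (-k) = cK k := by simp [cK]
  have harg : -(k.1 : ℝ) * x.1 + -(k.2 : ℝ) * x.2 = -((k.1 : ℝ) * x.1 + (k.2 : ℝ) * x.2) := by
    ring
  rw [hcK, harg, Real.sin_neg, Real.cos_neg] at h2
  set s := Real.sin ((k.1 : ℝ) * x.1 + (k.2 : ℝ) * x.2) with hsdef
  set co := Real.cos ((k.1 : ℝ) * x.1 + (k.2 : ℝ) * x.2) with hcodef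
  have pyth : s ^ 2 + co ^ 2 = 1 := Real.sin_sq_add_cos_sq _
  set K : ℝ := (k.1 : ℝ) ^ 2 + (k.2 : ℝ) ^ 2 with hKdef
  have hK1 : (1 : ℝ) ≤ K := by
    rcases hs with h | ⟨h1', h2'⟩
    · have : (1 : ℝ) ≤ (k.1 : ℝ) := by exact_mod_cast h
      nlinarith [sq_nonneg ((k.2 : ℝ))]
    · have : (1 : ℝ) ≤ (k.2 : ℝ) := by exact_mod_cast h2'
      nlinarith [sq_nonneg ((k.1 : ℝ))]
  have hc : cK k * K = 1 := inv_mul_cancel₀ (by linarith)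
  have e1 : (cK k * (co * ((k.2 : ℝ) * y.1 - (k.1 : ℝ) * y.2) +
      s * ((k.1 : ℝ) * τ.1 + (k.2 : ℝ) * τ.2) * ((k.1 : ℝ) * p.2 - (k.2 : ℝ) * p.1))) ^ 2
      ≤ M ^ 2 := by
    have := pow_le_pow_left₀ (abs_nonneg _) h1 2
    rwa [sq_abs] at this
  have e2 : (cK k * (-s * (-(k.1 : ℝ) * y.2 - -(k.2 : ℝ) * y.1) +
      co * (-(k.1 : ℝ) * τ.1 + -(k.2 : ℝ) * τ.2) * (-(k.1 : ℝ) * p.2 - -(k.2 : ℝ) * p.1))) ^ 2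
      ≤ M ^ 2 := by
    have := pow_le_pow_left₀ (abs_nonneg _) h2 2
    rwa [sq_abs] at this
  refine rot_bound (cK k) K s co ((k.1 : ℝ) * y.2 - (k.2 : ℝ) * y.1)
    (((k.1 : ℝ) * τ.1 + (k.2 : ℝ) * τ.2) * ((k.1 : ℝ) * p.2 - (k.2 : ℝ) * p.1)) M pyth hc ?_ ?_
  · calc (cK k * (-(co * ((k.1 : ℝ) * y.2 - (k.2 : ℝ) * y.1)) +
        s * (((k.1 : ℝ) * τ.1 + (k.2 : ℝ) * τ.2) * ((k.1 : ℝ) * p.2 - (k.2 : ℝ) * p.1)))) ^ 2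
        = (cK k * (co * ((k.2 : ℝ) * y.1 - (k.1 : ℝ) * y.2) +
          s * ((k.1 : ℝ) * τ.1 + (k.2 : ℝ) * τ.2) * ((k.1 : ℝ) * p.2 - (k.2 : ℝ) * p.1))) ^ 2 := by
          ring
      _ ≤ M ^ 2 := e1
  · calc (cK k * (s * ((k.1 : ℝ) * y.2 - (k.2 : ℝ) * y.1) +
        co * (((k.1 : ℝ) * τ.1 + (k.2 : ℝ) * τ.2) * ((k.1 : ℝ) * p.2 - (k.2 : ℝ) * p.1)))) ^ 2
        = (cK k * (-s * (-(k.1 : ℝ) * y.2 - -(k.2 : ℝ) * y.1) +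
          co * (-(k.1 : ℝ) * τ.1 + -(k.2 : ℝ) * τ.2) * (-(k.1 : ℝ) * p.2 - -(k.2 : ℝ) * p.1))) ^ 2 := by
          ring
      _ ≤ M ^ 2 := e2


set_option maxHeartbeats 2000000 in
/-- **Nondegeneracy of the forcing directions for the tangent process.**
There is `C > 0` such that for all `x' ∈ ℝ²`, `τ' ∈ ℝ² ∖ {0}`, and `y, p ∈ ℝ²`,
`√(|y|² + |p|²) ≤ C (1 + |τ'|⁻¹) max_{0 < |k| ≤ 2} |u_k(x')·y + ((τ'·∇)u_k(x'))·p|`. -/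
theorem tangent_nondegeneracy :
    ∃ C > (0 : ℝ), ∀ x' : ℝ × ℝ, ∀ τ' : ℝ × ℝ, τ' ≠ 0 → ∀ y p : ℝ × ℝ,
      Real.sqrt (y.1 ^ 2 + y.2 ^ 2 + p.1 ^ 2 + p.2 ^ 2) ≤
        C * (1 + (enorm2 τ')⁻¹) *
          sSup {t | ∃ k : ℤ × ℤ, k ≠ 0 ∧ (k.1 : ℝ) ^ 2 + (k.2 : ℝ) ^ 2 ≤ 4 ∧
            t = |dotR (uFun k x') y + dotR (fderiv ℝ (uFun k) x' τ') p|} := by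
  refine ⟨10, by norm_num, ?_⟩
  intro x' τ' hτ y p
  have hSsub : {t | ∃ k : ℤ × ℤ, k ≠ 0 ∧ (k.1 : ℝ) ^ 2 + (k.2 : ℝ) ^ 2 ≤ 4 ∧
      t = |dotR (uFun k x') y + dotR (fderiv ℝ (uFun k) x' τ') p|} ⊆
      (fun k : ℤ × ℤ => |dotR (uFun k x') y + dotR (fderiv ℝ (uFun k) x' τ') p|) ''
        (Set.Icc ((-2, -2) : ℤ × ℤ) (2, 2)) := by
    rintro t ⟨k, hk0, hk4, rfl⟩
    refine ⟨k, ?_, rfl⟩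
    have ha : (-2 : ℝ) ≤ (k.1 : ℝ) := by nlinarith [sq_nonneg ((k.1 : ℝ) + 2), sq_nonneg ((k.2 : ℝ))]
    have hb : (k.1 : ℝ) ≤ 2 := by nlinarith [sq_nonneg ((k.1 : ℝ) - 2), sq_nonneg ((k.2 : ℝ))]
    have hc : (-2 : ℝ) ≤ (k.2 : ℝ) := by nlinarith [sq_nonneg ((k.2 : ℝ) + 2), sq_nonneg ((k.1 : ℝ))]
    have hd : (k.2 : ℝ) ≤ 2 := by nlinarith [sq_nonneg ((k.2 : ℝ) - 2), sq_nonneg ((k.1 : ℝ))]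
    simp only [Set.mem_Icc, Prod.le_def]
    exact ⟨⟨by exact_mod_cast ha, by exact_mod_cast hc⟩, by exact_mod_cast hb, by exact_mod_cast hd⟩
  have hBdd : BddAbove {t | ∃ k : ℤ × ℤ, k ≠ 0 ∧ (k.1 : ℝ) ^ 2 + (k.2 : ℝ) ^ 2 ≤ 4 ∧
      t = |dotR (uFun k x') y + dotR (fderiv ℝ (uFun k) x' τ') p|} :=
    (((Set.finite_Icc _ _).image _).bddAbove).mono hSsub
  set M := sSup {t | ∃ k : ℤ × ℤ, k ≠ 0 ∧ (k.1 : ℝ) ^ 2 + (k.2 : ℝ) ^ 2 ≤ 4 ∧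
      t = |dotR (uFun k x') y + dotR (fderiv ℝ (uFun k) x' τ') p|} with hMdef
  have key : ∀ k : ℤ × ℤ, k ≠ 0 → (k.1 : ℝ) ^ 2 + (k.2 : ℝ) ^ 2 ≤ 4 →
      |dotR (uFun k x') y + dotR (fderiv ℝ (uFun k) x' τ') p| ≤ M :=
    fun k h1 h2 => le_csSup hBdd ⟨k, h1, h2, rfl⟩
  have hM0 : 0 ≤ M :=
    le_trans (abs_nonneg _) (key (1, 0) (by decide) (by norm_num))
  have P1 := pair_bound (1, 0) (by norm_num) x' τ' y p M
    (key (1, 0) (by decide) (by norm_num)) (key (-(1, 0)) (by decide) (by norm_num))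
  have P2 := pair_bound (0, 1) (by norm_num) x' τ' y p M
    (key (0, 1) (by decide) (by norm_num)) (key (-(0, 1)) (by decide) (by norm_num))
  have P3 := pair_bound (1, 1) (by norm_num) x' τ' y p M
    (key (1, 1) (by decide) (by norm_num)) (key (-(1, 1)) (by decide) (by norm_num))
  have P4 := pair_bound (1, -1) (by norm_num) x' τ' y p M
    (key (1, -1) (by decide) (by norm_num)) (key (-(1, -1)) (by decide) (by norm_num))
  norm_num at P1 P2 P3 P4
  -- P1 : y.2^2 + (τ'.1 * p.2)^2 ≤ 2 M², etc.
  have hne : τ'.1 ≠ 0 ∨ τ'.2 ≠ 0 := by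
    by_contra h
    push_neg at h
    exact hτ (Prod.ext_iff.mpr ⟨h.1, h.2⟩)
  have hpos : 0 < τ'.1 ^ 2 + τ'.2 ^ 2 := by
    rcases hne with h | h
    · have h1 := abs_pos.mpr h
      nlinarith [sq_abs τ'.1, sq_nonneg τ'.2]
    · have h1 := abs_pos.mpr h
      nlinarith [sq_abs τ'.2, sq_nonneg τ'.1]
  set eps := enorm2 τ' with hepsdef
  have heps : 0 < eps := Real.sqrt_pos.mpr hpos
  have heps2 : eps ^ 2 = τ'.1 ^ 2 + τ'.2 ^ 2 := Real.sq_sqrt hpos.le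
  have hy : y.1 ^ 2 + y.2 ^ 2 ≤ 4 * M ^ 2 := by
    nlinarith [sq_nonneg (τ'.1 * p.2), sq_nonneg (τ'.2 * p.1)]
  have hp : eps ^ 2 * (p.1 ^ 2 + p.2 ^ 2) ≤ 16 * M ^ 2 := by
    rw [heps2]
    nlinarith [P1, P2, P3, P4, sq_nonneg (τ'.1 * p.2 - τ'.2 * p.1), sq_nonneg y.1,
      sq_nonneg y.2, sq_nonneg (y.2 - y.1), sq_nonneg (y.1 + y.2)]
  have hcan : eps * eps⁻¹ = 1 := mul_inv_cancel₀ heps.ne'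
  have hR : 0 ≤ 10 * (1 + eps⁻¹) * M := by
    have h1 : (0 : ℝ) ≤ 10 * (1 + eps⁻¹) := by positivity
    exact mul_nonneg h1 hM0
  have hfin : y.1 ^ 2 + y.2 ^ 2 + p.1 ^ 2 + p.2 ^ 2 ≤ (10 * (1 + eps⁻¹) * M) ^ 2 := by
    have h' : eps * (1 + eps⁻¹) = eps + 1 := by rw [mul_add, mul_one, hcan]
    have hexp : eps ^ 2 * ((10 * (1 + eps⁻¹) * M) ^ 2) = 100 * (eps + 1) ^ 2 * M ^ 2 := by
      linear_combination (100 * M ^ 2 * (eps * (1 + eps⁻¹) + eps + 1)) * h'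
    have key2 : eps ^ 2 * (y.1 ^ 2 + y.2 ^ 2 + p.1 ^ 2 + p.2 ^ 2) ≤
        eps ^ 2 * ((10 * (1 + eps⁻¹) * M) ^ 2) := by
      rw [hexp]
      nlinarith [mul_le_mul_of_nonneg_left hy (sq_nonneg eps), hp,
        mul_nonneg heps.le (mul_nonneg hM0 hM0), sq_nonneg (eps * M), sq_nonneg M, heps.le]
    exact le_of_mul_le_mul_left key2 (by positivity)
  calc Real.sqrt (y.1 ^ 2 + y.2 ^ 2 + p.1 ^ 2 + p.2 ^ 2)
      ≤ Real.sqrt ((10 * (1 + eps⁻¹) * M) ^ 2) := Real.sqrt_le_sqrt hfin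
    _ = 10 * (1 + eps⁻¹) * M := Real.sqrt_sq hR
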